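/- Let S_1, …, S_m be disjoint independent sets of a matroid M (a partial coloring), Y a set of elements containing all uncolored elements, and j ∈ [m], x ∈ Y \ S_j with (S_j ∩ Y) ∪ {x} independent. Then either S_j ∪ {x} is independent, or there exists y ∈ S_j \ Y such that (S_j \ {y}) ∪ {x} is independent. -/
import Mathlib


open scoped Classical

structure FinMatroid (α : Type*) [DecidableEq α] where
  E : Finset α
  Indep : Finset α → Prop
  indep_empty : Indep ∅
  subset_ground : ∀ ⦃I⦄, Indep I → I ⊆ E
  indep_mono : ∀ ⦃I J⦄, Indep J → I ⊆ J → Indep I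
  indep_exchange : ∀ ⦃I J⦄, Indep I → Indep J → I.card < J.card →
      ∃ x ∈ J \ I, Indep (insert x I)

/-- A circuit is an inclusion-minimal dependent set (contained in the ground set). -/
def FinMatroid.Circuit {α : Type*} [DecidableEq α] (M : FinMatroid α) (C : Finset α) : Prop :=
  C ⊆ M.E ∧ ¬ M.Indep C ∧ ∀ D ⊂ C, M.Indep D

/-- If `Y` contains all uncolored elements and `x ∈ Y \ S j` with `(S j ∩ Y) ∪ {x}`
independent, then either `S j ∪ {x}` is independent, or some `y ∈ S j \ Y` has
`(S j \ {y}) ∪ {x}` independent. -/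
theorem stmt_7 {α : Type*} [DecidableEq α] (M : FinMatroid α) (m : ℕ)
    (S : Fin m → Finset α) (Y : Finset α) (j : Fin m) (x : α)
    (hS : ∀ i, M.Indep (S i)) (hSdisj : ∀ i i', i ≠ i' → Disjoint (S i) (S i'))
    (hY : M.E \ Finset.univ.biUnion S ⊆ Y)
    (hx : x ∈ Y \ S j)
    (hind : M.Indep (insert x (S j ∩ Y))) :
    M.Indep (insert x (S j)) ∨ ∃ y ∈ S j \ Y, M.Indep (insert x ((S j).erase y)) := by
  by_cases h : M.Indep (insert x (S j))
  · exact Or.inl h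
  right
  have hxY : x ∈ Y := (Finset.mem_sdiff.mp hx).1
  have hxS : x ∉ S j := (Finset.mem_sdiff.mp hx).2
  -- maximal-size case helper
  have hfull : ∀ I : Finset α, M.Indep I → I ⊆ insert x (S j) → ¬ I.card < (S j).card →
      I.card = (S j).card := by
    intro I hI hsub hlt
    have hle : I.card ≤ (S j).card + 1 := by
      have := Finset.card_le_card hsub
      simpa [Finset.card_insert_of_notMem hxS] using this
    by_cases h' : I.card = (S j).card
    · exact h'
    · exfalso
      have h'' : I.card = (S j).card + 1 := by omega
      have : I = insert x (S j) := Finset.eq_of_subset_of_card_le hsub (by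
        simp [Finset.card_insert_of_notMem hxS, h''])
      exact h (this ▸ hI)
  -- grow the independent set
  have grow : ∀ n : ℕ, ∀ I : Finset α, M.Indep I → insert x (S j ∩ Y) ⊆ I →
      I ⊆ insert x (S j) → (S j).card - I.card ≤ n →
      ∃ J, M.Indep J ∧ insert x (S j ∩ Y) ⊆ J ∧ J ⊆ insert x (S j) ∧
        J.card = (S j).card := by
    intro n
    induction n with
    | zero =>
      intro I hI hs1 hs2 hle
      refine ⟨I, hI, hs1, hs2, hfull I hI hs2 ?_⟩
      omega
    | succ n ih =>
      intro I hI hs1 hs2 hle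
      by_cases hc : I.card < (S j).card
      · obtain ⟨z, hz, hzi⟩ := M.indep_exchange hI (hS j) hc
        have hzS : z ∈ S j := (Finset.mem_sdiff.mp hz).1
        have hzI : z ∉ I := (Finset.mem_sdiff.mp hz).2
        refine ih (insert z I) hzi (hs1.trans (Finset.subset_insert _ _))
          (Finset.insert_subset (Finset.mem_insert_of_mem hzS) hs2) ?_
        rw [Finset.card_insert_of_notMem hzI]
        omega
      · exact ⟨I, hI, hs1, hs2, hfull I hI hs2 hc⟩
  obtain ⟨J, hJ, hJs1, hJs2, hJc⟩ := grow ((S j).card) (insert x (S j ∩ Y)) hind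
    (le_refl _) (by
      apply Finset.insert_subset (Finset.mem_insert_self _ _)
      exact (Finset.inter_subset_left).trans (Finset.subset_insert _ _)) (by omega)
  have hxJ : x ∈ J := hJs1 (Finset.mem_insert_self _ _)
  -- find the missing element y
  have hne : (S j \ J).Nonempty := by
    rw [Finset.sdiff_nonempty]
    intro hsub
    have : insert x (S j) ⊆ J := Finset.insert_subset hxJ hsub
    have := Finset.card_le_card this
    rw [Finset.card_insert_of_notMem hxS] at this
    omega
  obtain ⟨y, hy⟩ := hne
  have hyS : y ∈ S j := (Finset.mem_sdiff.mp hy).1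
  have hyJ : y ∉ J := (Finset.mem_sdiff.mp hy).2
  have hyY : y ∉ Y := by
    intro hyY
    exact hyJ (hJs1 (Finset.mem_insert_of_mem (Finset.mem_inter.mpr ⟨hyS, hyY⟩)))
  have hyx : y ≠ x := fun h' => hxS (h' ▸ hyS)
  have hJeq : J = insert x ((S j).erase y) := by
    apply Finset.eq_of_subset_of_card_le
    · intro a ha
      rcases Finset.mem_insert.mp (hJs2 ha) with rfl | haS
      · exact Finset.mem_insert_self _ _
      · refine Finset.mem_insert_of_mem (Finset.mem_erase.mpr ⟨?_, haS⟩)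
        rintro rfl; exact hyJ ha
    · have hx' : x ∉ (S j).erase y := fun hc => hxS (Finset.mem_of_mem_erase hc)
      rw [Finset.card_insert_of_notMem hx', Finset.card_erase_of_mem hyS, hJc]
      have : 1 ≤ (S j).card := Finset.card_pos.mpr ⟨y, hyS⟩
      omega
  exact ⟨y, Finset.mem_sdiff.mpr ⟨hyS, hyY⟩, hJeq ▸ hJ⟩
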